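/- Let n ≥ 2 and let C ∈ ℝ^{n×n} be a matrix of grid values on a uniform n×n grid with spacing h̃ = 1/(n−1), with discrete H¹ seminorm |||C|||²_∇ := Σ_{i,j≥2}(C_{i,j}−C_{i−1,j})² + Σ_{i,j≥2}(C_{i,j}−C_{i,j−1})². Let χ(C) be the continuous piecewise bilinear interpolant of these values on [0,1]². Then there is an absolute constant c > 0 with |χ(C)|²_{H¹([0,1]²)} ≥ c · |||C|||²_∇... equivalently |||C|||²_∇ ≤ C₀ |χ(C)|²_{H¹([0,1]²)} for an absolute constant C₀. -/

import Mathlib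

/-- Index of the grid cell containing `t` on the uniform grid of `[0,1]` with `n` nodes
(spacing `1/(n-1)`). -/
noncomputable def gridIdx (n : ℕ) (t : ℝ) : ℕ := min (⌊t * (n - 1 : ℕ)⌋₊) (n - 2)

/-- Continuous piecewise bilinear interpolant `χ(C)` of the grid values
`C : ℕ → ℕ → ℝ` on the uniform `n × n` tensor grid of `[0,1]²`. -/
noncomputable def bilinearInterp (n : ℕ) (C : ℕ → ℕ → ℝ) (x y : ℝ) : ℝ :=
  let i := gridIdx n x
  let j := gridIdx n y
  let s := x * (n - 1 : ℕ) - i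
  let t := y * (n - 1 : ℕ) - j
  (1 - s) * (1 - t) * C i j + s * (1 - t) * C (i + 1) j +
    (1 - s) * t * C i (j + 1) + s * t * C (i + 1) (j + 1)

open MeasureTheory intervalIntegral Set

noncomputable def auxM (n : ℕ) : ℝ := ((n - 1 : ℕ) : ℝ)
def auxDx (C : ℕ → ℕ → ℝ) (i j : ℕ) : ℝ := C (i+1) j - C i j
def auxDy (C : ℕ → ℕ → ℝ) (i j : ℕ) : ℝ := C i (j+1) - C i j
noncomputable def auxFx (n : ℕ) (C : ℕ → ℕ → ℝ) (i j : ℕ) (t : ℝ) : ℝ :=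
  auxM n * ((1 - t) * auxDx C i j + t * auxDx C i (j+1))
noncomputable def auxFy (n : ℕ) (C : ℕ → ℕ → ℝ) (i j : ℕ) (s : ℝ) : ℝ :=
  auxM n * ((1 - s) * auxDy C i j + s * auxDy C (i+1) j)
def auxQx (C : ℕ → ℕ → ℝ) (i j : ℕ) : ℝ :=
  (auxDx C i j)^2 + auxDx C i j * auxDx C i (j+1) + (auxDx C i (j+1))^2
def auxQy (C : ℕ → ℕ → ℝ) (i j : ℕ) : ℝ :=
  (auxDy C i j)^2 + auxDy C i j * auxDy C (i+1) j + (auxDy C (i+1) j)^2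

/-- value of the inner (in `x`) integral, as a function of `y`. -/
noncomputable def auxG (n : ℕ) (C : ℕ → ℕ → ℝ) (y : ℝ) : ℝ :=
  ∑ i ∈ Finset.range (n-1), (auxM n)⁻¹ *
    ((auxFx n C i (gridIdx n y) (y * auxM n - (gridIdx n y : ℝ)))^2
      + (auxM n)^2 * auxQy C i (gridIdx n y) / 3)

lemma auxM_pos {n : ℕ} (hn : 1 ≤ n - 1) : 0 < auxM n := by
  unfold auxM; exact Nat.cast_pos.2 (by omega)

lemma integral_sq_affine (a b : ℝ) :
    ∫ u in (0:ℝ)..1, ((1-u)*a + u*b)^2 = (a^2 + a*b + b^2)/3 := by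
  have h : ∀ u : ℝ, ((1-u)*a + u*b)^2 = a^2 + 2*a*(b-a)*u + (b-a)^2*u^2 := fun u => by ring
  simp only [h]
  rw [intervalIntegral.integral_add
      ((by fun_prop : Continuous fun u : ℝ => a^2 + 2*a*(b-a)*u).intervalIntegrable 0 1)
      ((by fun_prop : Continuous fun u : ℝ => (b-a)^2*u^2).intervalIntegrable 0 1),
    intervalIntegral.integral_add (continuous_const.intervalIntegrable 0 1)
      ((by fun_prop : Continuous fun u : ℝ => 2*a*(b-a)*u).intervalIntegrable 0 1),
    intervalIntegral.integral_const, intervalIntegral.integral_const_mul,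
    intervalIntegral.integral_const_mul, integral_id, integral_pow]
  norm_num; ring

lemma integral_cell (f : ℝ → ℝ) {M : ℝ} (hM : M ≠ 0) (i : ℝ) :
    ∫ x in (i/M)..((i+1)/M), f (x*M - i) = M⁻¹ * ∫ u in (0:ℝ)..1, f u := by
  have h := intervalIntegral.integral_comp_mul_right (a := i/M) (b := (i+1)/M)
    (fun u => f (u - i)) hM
  rw [div_mul_cancel₀ _ hM, div_mul_cancel₀ _ hM] at h
  rw [h, intervalIntegral.integral_comp_sub_right f i]
  norm_num [smul_eq_mul]

lemma continuous_auxFx (n : ℕ) (C : ℕ → ℕ → ℝ) (i j : ℕ) :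
    Continuous (fun t => auxFx n C i j t) := by
  unfold auxFx; fun_prop

lemma continuous_auxFy (n : ℕ) (C : ℕ → ℕ → ℝ) (i j : ℕ) :
    Continuous (fun s => auxFy n C i j s) := by
  unfold auxFy; fun_prop

lemma integral_Fx_sq (n : ℕ) (C : ℕ → ℕ → ℝ) (i j : ℕ) :
    ∫ u in (0:ℝ)..1, (auxFx n C i j u)^2 = (auxM n)^2 * auxQx C i j / 3 := by
  have h : ∀ u : ℝ, (auxFx n C i j u)^2
      = (auxM n)^2 * ((1-u) * auxDx C i j + u * auxDx C i (j+1))^2 := fun u => by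
    simp only [auxFx]; ring
  simp only [h]
  rw [intervalIntegral.integral_const_mul, integral_sq_affine]
  simp only [auxQx]; ring

lemma integral_Fy_sq (n : ℕ) (C : ℕ → ℕ → ℝ) (i j : ℕ) :
    ∫ u in (0:ℝ)..1, (auxFy n C i j u)^2 = (auxM n)^2 * auxQy C i j / 3 := by
  have h : ∀ u : ℝ, (auxFy n C i j u)^2
      = (auxM n)^2 * ((1-u) * auxDy C i j + u * auxDy C (i+1) j)^2 := fun u => by
    simp only [auxFy]; ring
  simp only [h]
  rw [intervalIntegral.integral_const_mul, integral_sq_affine]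
  simp only [auxQy]; ring

lemma gridIdx_eq_of_mem {n : ℕ} {i : ℕ} (hi : i < n - 1) {x : ℝ}
    (h1 : (i:ℝ) < x * auxM n) (h2 : x * auxM n < i + 1) : gridIdx n x = i := by
  simp only [auxM] at h1 h2
  have h0 : (0:ℝ) ≤ x * ((n - 1 : ℕ) : ℝ) := le_of_lt (lt_of_le_of_lt (Nat.cast_nonneg i) h1)
  have hf : ⌊x * ((n - 1 : ℕ):ℝ)⌋₊ = i := (Nat.floor_eq_iff h0).2 ⟨le_of_lt h1, h2⟩
  unfold gridIdx
  rw [hf]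
  exact min_eq_left (by omega)

lemma grid_good {n : ℕ} (hn : 2 ≤ n) {y : ℝ} (h0 : 0 < y) (h1 : y < 1)
    (hnode : ∀ k : ℕ, y * auxM n ≠ k) :
    gridIdx n y < n - 1 ∧ (gridIdx n y : ℝ) < y * auxM n ∧ y * auxM n < gridIdx n y + 1 := by
  have hM : 0 < auxM n := auxM_pos (by omega)
  have hr0 : 0 ≤ y * auxM n := le_of_lt (mul_pos h0 hM)
  have hfl : (⌊y * auxM n⌋₊ : ℝ) ≤ y * auxM n := Nat.floor_le hr0
  have hfl2 : y * auxM n < ⌊y * auxM n⌋₊ + 1 := Nat.lt_floor_add_one _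
  have hlt : (⌊y * auxM n⌋₊ : ℝ) < y * auxM n :=
    lt_of_le_of_ne hfl (fun h => hnode ⌊y * auxM n⌋₊ h.symm)
  have hrM : y * auxM n < auxM n := by
    have := mul_lt_mul_of_pos_right h1 hM; simpa using this
  have hfn : ⌊y * auxM n⌋₊ < n - 1 := by
    have h2 : (⌊y * auxM n⌋₊ : ℝ) < ((n - 1 : ℕ) : ℝ) := lt_of_le_of_lt hfl hrM
    exact_mod_cast h2
  have hg : gridIdx n y = ⌊y * auxM n⌋₊ := by
    unfold auxM at hfn ⊢
    unfold gridIdx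
    exact min_eq_left (by omega)
  rw [hg]
  exact ⟨hfn, hlt, hfl2⟩

lemma deriv_x_eq {n : ℕ} (C : ℕ → ℕ → ℝ) {i : ℕ} (hi : i < n - 1) {x : ℝ} (y : ℝ)
    (h1 : (i:ℝ) < x * auxM n) (h2 : x * auxM n < i + 1) :
    deriv (fun x' => bilinearInterp n C x' y) x
      = auxFx n C i (gridIdx n y) (y * auxM n - (gridIdx n y : ℝ)) := by
  have hM : 0 < auxM n := auxM_pos (by omega)
  set j := gridIdx n y with hj
  set t : ℝ := y * auxM n - (j:ℝ) with ht
  set c1 : ℝ := auxFx n C i j t with hc1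
  set c0 : ℝ := (1-t) * C i j + t * C i (j+1)
    - (i:ℝ) * ((1-t) * auxDx C i j + t * auxDx C i (j+1)) with hc0
  have hx1 : (i:ℝ)/auxM n < x := (div_lt_iff₀ hM).2 (by linarith)
  have hx2 : x < ((i:ℝ)+1)/auxM n := (lt_div_iff₀ hM).2 (by linarith)
  have hloc : ∀ x' ∈ Set.Ioo ((i:ℝ)/auxM n) (((i:ℝ)+1)/auxM n),
      bilinearInterp n C x' y = c0 + c1 * x' := by
    intro x' hx'
    have hg : gridIdx n x' = i :=
      gridIdx_eq_of_mem hi ((div_lt_iff₀ hM).1 hx'.1) ((lt_div_iff₀ hM).1 hx'.2)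
    simp only [bilinearInterp, hg, ← hj]
    simp only [hc0, hc1, auxFx, auxDx, ht, auxM]
    ring
  have hev : (fun x' => bilinearInterp n C x' y) =ᶠ[nhds x] (fun x' => c0 + c1 * x') :=
    Filter.eventuallyEq_of_mem (Ioo_mem_nhds hx1 hx2) hloc
  rw [hev.deriv_eq]
  have hd : HasDerivAt (fun x' : ℝ => c0 + c1 * x') c1 x := by
    simpa using ((hasDerivAt_id x).const_mul c1).const_add c0
  exact hd.deriv

lemma bilinearInterp_swap (n : ℕ) (C : ℕ → ℕ → ℝ) (x y : ℝ) :
    bilinearInterp n C x y = bilinearInterp n (fun p q => C q p) y x := by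
  simp only [bilinearInterp]; ring

lemma deriv_y_eq {n : ℕ} (C : ℕ → ℕ → ℝ) {j : ℕ} (hj : j < n - 1) (x : ℝ) {y : ℝ}
    (h1 : (j:ℝ) < y * auxM n) (h2 : y * auxM n < j + 1) :
    deriv (fun y' => bilinearInterp n C x y') y
      = auxFy n C (gridIdx n x) j (x * auxM n - (gridIdx n x : ℝ)) := by
  have hfun : (fun y' => bilinearInterp n C x y')
      = fun y' => bilinearInterp n (fun p q => C q p) y' x :=
    funext fun y' => bilinearInterp_swap n C x y'
  rw [hfun, deriv_x_eq (fun p q => C q p) hj x h1 h2]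
  simp only [auxFx, auxFy, auxDx, auxDy]

lemma cell_x {n : ℕ} (hn : 2 ≤ n) (C : ℕ → ℕ → ℝ) {j : ℕ} (hj : j < n - 1) {y : ℝ}
    (hy1 : (j:ℝ) < y * auxM n) (hy2 : y * auxM n < j + 1) (hjy : gridIdx n y = j)
    {i : ℕ} (hi : i < n - 1) :
    IntervalIntegrable (fun x => (deriv (fun x' => bilinearInterp n C x' y) x)^2
        + (deriv (fun y' => bilinearInterp n C x y') y)^2) volume
      ((i:ℝ)/auxM n) (((i:ℝ)+1)/auxM n) ∧
    (∫ x in ((i:ℝ)/auxM n)..(((i:ℝ)+1)/auxM n),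
        ((deriv (fun x' => bilinearInterp n C x' y) x)^2
          + (deriv (fun y' => bilinearInterp n C x y') y)^2))
      = (auxM n)⁻¹ * ((auxFx n C i j (y * auxM n - (j:ℝ)))^2 + (auxM n)^2 * auxQy C i j / 3) := by
  have hM : 0 < auxM n := auxM_pos (by omega)
  have hMne : auxM n ≠ 0 := ne_of_gt hM
  set g : ℝ → ℝ := fun x => (auxFx n C i j (y * auxM n - (j:ℝ)))^2
    + (auxFy n C i j (x * auxM n - (i:ℝ)))^2 with hgdef
  have hlt : (i:ℝ)/auxM n < ((i:ℝ)+1)/auxM n := by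
    apply div_lt_div_of_pos_right (by linarith) hM
  have heq : ∀ x ∈ Set.Ioo ((i:ℝ)/auxM n) (((i:ℝ)+1)/auxM n),
      (deriv (fun x' => bilinearInterp n C x' y) x)^2
        + (deriv (fun y' => bilinearInterp n C x y') y)^2 = g x := by
    intro x hx
    have h1 : (i:ℝ) < x * auxM n := (div_lt_iff₀ hM).1 hx.1
    have h2 : x * auxM n < i + 1 := (lt_div_iff₀ hM).1 hx.2
    have hgx : gridIdx n x = i := gridIdx_eq_of_mem hi h1 h2
    rw [deriv_x_eq C hi y h1 h2, deriv_y_eq C hj x hy1 hy2, hjy, hgx]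
  have hae : ∀ᵐ x : ℝ, x ∈ Set.uIoc ((i:ℝ)/auxM n) (((i:ℝ)+1)/auxM n) →
      (deriv (fun x' => bilinearInterp n C x' y) x)^2
        + (deriv (fun y' => bilinearInterp n C x y') y)^2 = g x := by
    filter_upwards [(Set.countable_singleton (((i:ℝ)+1)/auxM n)).ae_notMem volume] with x hx hmem
    rw [Set.uIoc_of_le (le_of_lt hlt)] at hmem
    exact heq x ⟨hmem.1, lt_of_le_of_ne hmem.2 (fun h => hx (by simp [h]))⟩
  have hgc : Continuous g := by
    apply Continuous.add continuous_const
    exact ((continuous_auxFy n C i j).comp (by fun_prop)).pow 2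
  have hgi : IntervalIntegrable g volume ((i:ℝ)/auxM n) (((i:ℝ)+1)/auxM n) :=
    hgc.intervalIntegrable _ _
  constructor
  · rw [intervalIntegrable_iff] at hgi ⊢
    exact hgi.congr ((ae_restrict_iff' measurableSet_uIoc).2
      (hae.mono (fun x h hx => (h hx).symm)))
  · rw [intervalIntegral.integral_congr_ae hae]
    have hval : ∫ x in ((i:ℝ)/auxM n)..(((i:ℝ)+1)/auxM n), g x
        = (auxM n)⁻¹ * ∫ u in (0:ℝ)..1,
            ((auxFx n C i j (y * auxM n - (j:ℝ)))^2 + (auxFy n C i j u)^2) :=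
      integral_cell (fun u => (auxFx n C i j (y * auxM n - (j:ℝ)))^2 + (auxFy n C i j u)^2) hMne i
    rw [hval, intervalIntegral.integral_add intervalIntegrable_const
        ((show Continuous fun u => (auxFy n C i j u)^2 from
          (continuous_auxFy n C i j).pow 2).intervalIntegrable 0 1),
      intervalIntegral.integral_const, integral_Fy_sq]
    norm_num

lemma inner_eq {n : ℕ} (hn : 2 ≤ n) (C : ℕ → ℕ → ℝ) {y : ℝ} (h0 : 0 < y) (h1 : y < 1)
    (hnode : ∀ k : ℕ, y * auxM n ≠ k) :
    (∫ x in (0:ℝ)..1, ((deriv (fun x' => bilinearInterp n C x' y) x)^2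
        + (deriv (fun y' => bilinearInterp n C x y') y)^2)) = auxG n C y := by
  obtain ⟨hj, hy1, hy2⟩ := grid_good hn h0 h1 hnode
  have hM : 0 < auxM n := auxM_pos (by omega)
  have hMne : auxM n ≠ 0 := ne_of_gt hM
  have hcast : ∀ k : ℕ, ((k+1:ℕ):ℝ)/auxM n = ((k:ℝ)+1)/auxM n := by
    intro k; push_cast; ring
  have key := intervalIntegral.sum_integral_adjacent_intervals
    (a := fun k : ℕ => (k:ℝ)/auxM n) (n := n-1) (μ := volume)
    (f := fun x => (deriv (fun x' => bilinearInterp n C x' y) x)^2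
        + (deriv (fun y' => bilinearInterp n C x y') y)^2)
    (fun k hk => by
      show IntervalIntegrable _ volume ((k:ℝ)/auxM n) (((k+1:ℕ):ℝ)/auxM n)
      rw [hcast k]
      exact (cell_x hn C hj hy1 hy2 rfl hk).1)
  have e0 : ((0:ℕ):ℝ)/auxM n = 0 := by norm_num
  have e1 : (((n-1:ℕ)):ℝ)/auxM n = 1 := div_self hMne
  rw [e0, e1] at key
  rw [← key]
  apply Finset.sum_congr rfl
  intro k hk
  rw [hcast k, (cell_x hn C hj hy1 hy2 rfl (Finset.mem_range.1 hk)).2]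

lemma cell_y {n : ℕ} (hn : 2 ≤ n) (C : ℕ → ℕ → ℝ) {j : ℕ} (hj : j < n - 1) :
    IntervalIntegrable (auxG n C) volume ((j:ℝ)/auxM n) (((j:ℝ)+1)/auxM n) ∧
    (∫ y in ((j:ℝ)/auxM n)..(((j:ℝ)+1)/auxM n), auxG n C y)
      = ∑ i ∈ Finset.range (n-1), (auxQx C i j / 3 + auxQy C i j / 3) := by
  have hM : 0 < auxM n := auxM_pos (by omega)
  have hMne : auxM n ≠ 0 := ne_of_gt hM
  set H : ℝ → ℝ := fun u => ∑ i ∈ Finset.range (n-1), (auxM n)⁻¹ *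
    ((auxFx n C i j u)^2 + (auxM n)^2 * auxQy C i j / 3) with hH
  have hHc : Continuous H := by
    apply continuous_finset_sum
    intro i _
    exact continuous_const.mul (((continuous_auxFx n C i j).pow 2).add continuous_const)
  have hlt : (j:ℝ)/auxM n < ((j:ℝ)+1)/auxM n := by
    apply div_lt_div_of_pos_right (by linarith) hM
  have heq : ∀ y ∈ Set.Ioo ((j:ℝ)/auxM n) (((j:ℝ)+1)/auxM n),
      auxG n C y = H (y * auxM n - (j:ℝ)) := by
    intro y hy
    have hg : gridIdx n y = j :=
      gridIdx_eq_of_mem hj ((div_lt_iff₀ hM).1 hy.1) ((lt_div_iff₀ hM).1 hy.2)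
    simp only [auxG, hg, hH]
  have hae : ∀ᵐ y : ℝ, y ∈ Set.uIoc ((j:ℝ)/auxM n) (((j:ℝ)+1)/auxM n) →
      auxG n C y = H (y * auxM n - (j:ℝ)) := by
    filter_upwards [(Set.countable_singleton (((j:ℝ)+1)/auxM n)).ae_notMem volume] with y hy hmem
    rw [Set.uIoc_of_le (le_of_lt hlt)] at hmem
    exact heq y ⟨hmem.1, lt_of_le_of_ne hmem.2 (fun h => hy (by simp [h]))⟩
  have hgi : IntervalIntegrable (fun y => H (y * auxM n - (j:ℝ))) volume
      ((j:ℝ)/auxM n) (((j:ℝ)+1)/auxM n) :=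
    (hHc.comp (by fun_prop)).intervalIntegrable _ _
  have hint01 : ∫ u in (0:ℝ)..1, H u = ∑ i ∈ Finset.range (n-1),
      (auxM n)⁻¹ * ((auxM n)^2 * auxQx C i j / 3 + (auxM n)^2 * auxQy C i j / 3) := by
    rw [hH, intervalIntegral.integral_finset_sum (fun i _ =>
      (show Continuous fun u => (auxM n)⁻¹ *
          ((auxFx n C i j u)^2 + (auxM n)^2 * auxQy C i j / 3) from
        (continuous_const.mul (((continuous_auxFx n C i j).pow 2).add
        continuous_const))).intervalIntegrable 0 1)]
    apply Finset.sum_congr rfl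
    intro i _
    rw [intervalIntegral.integral_const_mul,
      intervalIntegral.integral_add ((show Continuous fun u => (auxFx n C i j u)^2 from
          (continuous_auxFx n C i j).pow 2).intervalIntegrable 0 1)
        intervalIntegrable_const,
      intervalIntegral.integral_const, integral_Fx_sq]
    norm_num
  constructor
  · rw [intervalIntegrable_iff] at hgi ⊢
    exact hgi.congr ((ae_restrict_iff' measurableSet_uIoc).2
      (hae.mono (fun y h hy => (h hy).symm)))
  · rw [intervalIntegral.integral_congr_ae hae, integral_cell H hMne (j:ℝ), hint01,
      Finset.mul_sum]
    apply Finset.sum_congr rfl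
    intro i _
    field_simp

lemma total_eq {n : ℕ} (hn : 2 ≤ n) (C : ℕ → ℕ → ℝ) :
    (∫ y in (0:ℝ)..1, ∫ x in (0:ℝ)..1,
        ((deriv (fun x' => bilinearInterp n C x' y) x) ^ 2 +
          (deriv (fun y' => bilinearInterp n C x y') y) ^ 2))
      = ∑ j ∈ Finset.range (n-1), ∑ i ∈ Finset.range (n-1),
          (auxQx C i j / 3 + auxQy C i j / 3) := by
  have hM : 0 < auxM n := auxM_pos (by omega)
  have hMne : auxM n ≠ 0 := ne_of_gt hM
  have hcast : ∀ k : ℕ, ((k+1:ℕ):ℝ)/auxM n = ((k:ℝ)+1)/auxM n := fun k => by push_cast; ring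
  have hout : (∫ y in (0:ℝ)..1, ∫ x in (0:ℝ)..1,
        ((deriv (fun x' => bilinearInterp n C x' y) x) ^ 2 +
          (deriv (fun y' => bilinearInterp n C x y') y) ^ 2))
      = ∫ y in (0:ℝ)..1, auxG n C y := by
    apply intervalIntegral.integral_congr_ae
    have hcnt : (Set.range (fun k : ℕ => (k:ℝ)/auxM n) ∪ {1} : Set ℝ).Countable :=
      (Set.countable_range _).union (Set.countable_singleton 1)
    filter_upwards [hcnt.ae_notMem volume] with y hy hmem
    rw [Set.uIoc_of_le (by norm_num : (0:ℝ) ≤ 1)] at hmem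
    have h1 : y < 1 := lt_of_le_of_ne hmem.2 (fun h => hy (Or.inr (by simp [h])))
    have hnode : ∀ k : ℕ, y * auxM n ≠ k := by
      intro k hk
      exact hy (Or.inl ⟨k, by rw [div_eq_iff hMne]; exact hk.symm⟩)
    exact inner_eq hn C hmem.1 h1 hnode
  rw [hout]
  have key := intervalIntegral.sum_integral_adjacent_intervals
    (a := fun k : ℕ => (k:ℝ)/auxM n) (n := n-1) (μ := volume) (f := auxG n C)
    (fun k hk => by
      show IntervalIntegrable _ volume ((k:ℝ)/auxM n) (((k+1:ℕ):ℝ)/auxM n)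
      rw [hcast k]
      exact (cell_y hn C hk).1)
  have e0 : ((0:ℕ):ℝ)/auxM n = 0 := by norm_num
  have e1 : (((n-1:ℕ)):ℝ)/auxM n = 1 := div_self hMne
  rw [e0, e1] at key
  rw [← key]
  exact Finset.sum_congr rfl (fun j hj => by
    rw [hcast j, (cell_y hn C (Finset.mem_range.1 hj)).2])

lemma count_lemma {m : ℕ} (hm : 1 ≤ m) (v : ℕ → ℝ) (hv : ∀ k, 0 ≤ v k) :
    ∑ k ∈ Finset.range (m+1), v k ≤ ∑ k ∈ Finset.range m, (v k + v (k+1)) := by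
  rw [Finset.sum_add_distrib, Finset.sum_range_succ]
  have h2 : v m ≤ ∑ k ∈ Finset.range m, v (k+1) := by
    have hmem : m - 1 ∈ Finset.range m := Finset.mem_range.2 (by omega)
    have := Finset.single_le_sum (f := fun k => v (k+1)) (fun k _ => hv _) hmem
    simpa [Nat.sub_add_cancel hm] using this
  linarith

/-- Two-dimensional discrete–continuous seminorm equivalence: the discrete `H¹`
seminorm `|||C|||²_∇` of grid values is bounded by an absolute constant times the
`H¹([0,1]²)` seminorm of the bilinear interpolant `χ(C)`. -/
theorem discrete_seminorm_le_bilinear_H1 :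
    ∃ C₀ : ℝ, 0 < C₀ ∧ ∀ n : ℕ, 2 ≤ n → ∀ C : ℕ → ℕ → ℝ,
      (∑ i ∈ Finset.range (n - 1), ∑ j ∈ Finset.range n, (C (i + 1) j - C i j) ^ 2) +
        (∑ i ∈ Finset.range n, ∑ j ∈ Finset.range (n - 1), (C i (j + 1) - C i j) ^ 2) ≤
      C₀ * ∫ y in (0:ℝ)..1, ∫ x in (0:ℝ)..1,
        ((deriv (fun x' => bilinearInterp n C x' y) x) ^ 2 +
          (deriv (fun y' => bilinearInterp n C x y') y) ^ 2) := by
  refine ⟨6, by norm_num, ?_⟩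
  intro n hn C
  rw [total_eq hn C]
  have hm1 : 1 ≤ n - 1 := by omega
  have hrange : Finset.range n = Finset.range ((n-1)+1) := by congr 1; omega
  have hX : (∑ i ∈ Finset.range (n-1), ∑ j ∈ Finset.range n, (C (i+1) j - C i j)^2)
      ≤ ∑ j ∈ Finset.range (n-1), ∑ i ∈ Finset.range (n-1), 2 * auxQx C i j := by
    calc ∑ i ∈ Finset.range (n-1), ∑ j ∈ Finset.range n, (C (i+1) j - C i j)^2
        = ∑ i ∈ Finset.range (n-1), ∑ j ∈ Finset.range ((n-1)+1), (C (i+1) j - C i j)^2 := by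
          rw [hrange]
      _ ≤ ∑ i ∈ Finset.range (n-1), ∑ j ∈ Finset.range (n-1),
            ((C (i+1) j - C i j)^2 + (C (i+1) (j+1) - C i (j+1))^2) :=
          Finset.sum_le_sum (fun i _ => count_lemma hm1 _ (fun k => sq_nonneg _))
      _ ≤ ∑ i ∈ Finset.range (n-1), ∑ j ∈ Finset.range (n-1), 2 * auxQx C i j :=
          Finset.sum_le_sum (fun i _ => Finset.sum_le_sum (fun j _ => by
            simp only [auxQx, auxDx]
            nlinarith [sq_nonneg ((C (i+1) j - C i j) + (C (i+1) (j+1) - C i (j+1)))]))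
      _ = ∑ j ∈ Finset.range (n-1), ∑ i ∈ Finset.range (n-1), 2 * auxQx C i j :=
          Finset.sum_comm
  have hY : (∑ i ∈ Finset.range n, ∑ j ∈ Finset.range (n-1), (C i (j+1) - C i j)^2)
      ≤ ∑ j ∈ Finset.range (n-1), ∑ i ∈ Finset.range (n-1), 2 * auxQy C i j := by
    calc ∑ i ∈ Finset.range n, ∑ j ∈ Finset.range (n-1), (C i (j+1) - C i j)^2
        = ∑ j ∈ Finset.range (n-1), ∑ i ∈ Finset.range n, (C i (j+1) - C i j)^2 :=
          Finset.sum_comm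
      _ = ∑ j ∈ Finset.range (n-1), ∑ i ∈ Finset.range ((n-1)+1), (C i (j+1) - C i j)^2 := by
          rw [hrange]
      _ ≤ ∑ j ∈ Finset.range (n-1), ∑ i ∈ Finset.range (n-1),
            ((C i (j+1) - C i j)^2 + (C (i+1) (j+1) - C (i+1) j)^2) :=
          Finset.sum_le_sum (fun j _ => count_lemma hm1 _ (fun k => sq_nonneg _))
      _ ≤ ∑ j ∈ Finset.range (n-1), ∑ i ∈ Finset.range (n-1), 2 * auxQy C i j :=
          Finset.sum_le_sum (fun j _ => Finset.sum_le_sum (fun i _ => by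
            simp only [auxQy, auxDy]
            nlinarith [sq_nonneg ((C i (j+1) - C i j) + (C (i+1) (j+1) - C (i+1) j))]))
  have h6 : (6:ℝ) * (∑ j ∈ Finset.range (n-1), ∑ i ∈ Finset.range (n-1),
        (auxQx C i j / 3 + auxQy C i j / 3))
      = (∑ j ∈ Finset.range (n-1), ∑ i ∈ Finset.range (n-1), 2 * auxQx C i j)
        + (∑ j ∈ Finset.range (n-1), ∑ i ∈ Finset.range (n-1), 2 * auxQy C i j) := by
    rw [Finset.mul_sum, ← Finset.sum_add_distrib]
    refine Finset.sum_congr rfl (fun j _ => ?_)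
    rw [Finset.mul_sum, ← Finset.sum_add_distrib]
    refine Finset.sum_congr rfl (fun i _ => ?_)
    ring
  linarith
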